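/- Let C be a nonnegative n×n cost matrix, r, c ∈ Δⁿ, and η > 0. Let X_η minimize the entropy-regularized objective ⟨C, X⟩ − η H(X) over U(r,c), and let X* minimize ⟨C, X⟩ over U(r,c). Then ⟨C, X_η⟩ ≤ ⟨C, X*⟩ + 2η log n (for n ≥ 1), using that H(X) ∈ [1, 1 + 2 log n] for all X ∈ Δ^{n×n}. -/

import Mathlib

open Finset Real

lemma aux_entropy_le {ι : Type*} [Fintype ι] (hcard : 0 < Fintype.card ι)
    (p : ι → ℝ) (h0 : ∀ i, 0 ≤ p i) (h1 : ∑ i, p i = 1) :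
    ∑ i, Real.negMulLog (p i) ≤ Real.log (Fintype.card ι) := by
  set N : ℝ := (Fintype.card ι : ℝ) with hN
  have hNpos : (0:ℝ) < N := by rw [hN]; exact_mod_cast hcard
  have jensen := ConcaveOn.le_map_sum (t := Finset.univ) (w := fun _ : ι => 1 / N)
    (p := p) Real.concaveOn_negMulLog
    (fun i _ => by positivity)
    (by simp [Finset.sum_const, div_eq_mul_inv]; field_simp; exact hN.symm)
    (fun i _ => h0 i)
  simp only [smul_eq_mul, ← Finset.mul_sum, h1, mul_one] at jensen
  have heval : Real.negMulLog (1 / N) = (1 / N) * Real.log N := by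
    rw [Real.negMulLog, Real.log_div one_ne_zero (ne_of_gt hNpos), Real.log_one]
    ring
  rw [heval] at jensen
  have := mul_le_mul_of_nonneg_left jensen (le_of_lt hNpos)
  calc ∑ i, Real.negMulLog (p i)
      = N * ((1/N) * ∑ i, Real.negMulLog (p i)) := by field_simp
    _ ≤ N * ((1/N) * Real.log N) := this
    _ = Real.log N := by field_simp

theorem stmt_17 {n : ℕ} (hn : 1 ≤ n) (C : Matrix (Fin n) (Fin n) ℝ)
    (r c : Fin n → ℝ) (η : ℝ) (hη : 0 < η)
    (hC : ∀ i j, 0 ≤ C i j)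
    (hr0 : ∀ i, 0 ≤ r i) (hr1 : ∑ i, r i = 1)
    (hc0 : ∀ j, 0 ≤ c j) (hc1 : ∑ j, c j = 1)
    (Xη Xstar : Matrix (Fin n) (Fin n) ℝ)
    (hXη : (∀ i j, 0 ≤ Xη i j) ∧ (∀ i, ∑ j, Xη i j = r i) ∧ (∀ j, ∑ i, Xη i j = c j))
    (hXs : (∀ i j, 0 ≤ Xstar i j) ∧ (∀ i, ∑ j, Xstar i j = r i) ∧
      (∀ j, ∑ i, Xstar i j = c j))
    (hXηopt : ∀ X : Matrix (Fin n) (Fin n) ℝ,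
      (∀ i j, 0 ≤ X i j) → (∀ i, ∑ j, X i j = r i) → (∀ j, ∑ i, X i j = c j) →
      (∑ i, ∑ j, C i j * Xη i j) - η * (-∑ i, ∑ j, Xη i j * (Real.log (Xη i j) - 1)) ≤
      (∑ i, ∑ j, C i j * X i j) - η * (-∑ i, ∑ j, X i j * (Real.log (X i j) - 1)))
    (hXsopt : ∀ X : Matrix (Fin n) (Fin n) ℝ,
      (∀ i j, 0 ≤ X i j) → (∀ i, ∑ j, X i j = r i) → (∀ j, ∑ i, X i j = c j) →
      (∑ i, ∑ j, C i j * Xstar i j) ≤ ∑ i, ∑ j, C i j * X i j) :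
    (∑ i, ∑ j, C i j * Xη i j) ≤ (∑ i, ∑ j, C i j * Xstar i j) + 2 * η * Real.log n := by
  obtain ⟨hη0, hηr, hηc⟩ := hXη
  obtain ⟨hs0, hsr, hsc⟩ := hXs
  have key := hXηopt Xstar hs0 hsr hsc
  -- total mass of Xη is 1
  have hsumη : ∑ i, ∑ j, Xη i j = 1 := by
    rw [Finset.sum_congr rfl (fun i _ => hηr i)]; exact hr1
  have hsums : ∑ i, ∑ j, Xstar i j = 1 := by
    rw [Finset.sum_congr rfl (fun i _ => hsr i)]; exact hc1 ▸ hr1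
  -- rewrite entropies
  have hdecomp : ∀ (X : Matrix (Fin n) (Fin n) ℝ),
      (-∑ i, ∑ j, X i j * (Real.log (X i j) - 1)) =
      (∑ i, ∑ j, Real.negMulLog (X i j)) + ∑ i, ∑ j, X i j := by
    intro X
    rw [← Finset.sum_add_distrib, neg_eq_iff_eq_neg, ← Finset.sum_neg_distrib]
    apply Finset.sum_congr rfl; intro i _
    rw [← Finset.sum_add_distrib, ← Finset.sum_neg_distrib]
    apply Finset.sum_congr rfl; intro j _
    simp [Real.negMulLog]; ring
  -- H(Xη) ≤ 1 + 2 log n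
  have hcard : 0 < Fintype.card (Fin n × Fin n) := by simp; omega
  have hupper : ∑ i, ∑ j, Real.negMulLog (Xη i j) ≤ 2 * Real.log n := by
    have := aux_entropy_le hcard (fun p : Fin n × Fin n => Xη p.1 p.2)
      (fun p => hη0 p.1 p.2) (by rw [Fintype.sum_prod_type]; exact hsumη)
    rw [Fintype.sum_prod_type] at this
    calc ∑ i, ∑ j, Real.negMulLog (Xη i j)
        ≤ Real.log (Fintype.card (Fin n × Fin n)) := this
      _ = 2 * Real.log n := by
          rw [Fintype.card_prod, Fintype.card_fin]
          push_cast
          have hn0 : (n:ℝ) ≠ 0 := by positivity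
          rw [Real.log_mul hn0 hn0]; ring
  -- H(Xstar) ≥ 1, i.e. negMulLog part nonneg
  have hlower : 0 ≤ ∑ i, ∑ j, Real.negMulLog (Xstar i j) := by
    apply Finset.sum_nonneg; intro i _
    apply Finset.sum_nonneg; intro j _
    apply Real.negMulLog_nonneg (hs0 i j)
    calc Xstar i j ≤ ∑ j', Xstar i j' :=
          Finset.single_le_sum (fun j' _ => hs0 i j') (Finset.mem_univ j)
      _ ≤ ∑ i', ∑ j', Xstar i' j' :=
          Finset.single_le_sum (fun i' _ => Finset.sum_nonneg fun j' _ => hs0 i' j')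
            (Finset.mem_univ i)
      _ = 1 := hsums
  rw [hdecomp Xη, hdecomp Xstar, hsumη, hsums] at key
  nlinarith [hη.le]
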